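/- Let n and R be positive integers and let π be a uniformly random permutation of {1,…,n}, representing the positions in a ranking of objects drawn sequentially without replacement. Let M be the largest integer m such that the first m draws are pairwise more than R positions apart, i.e., |π(i) − π(j)| > R for all 1 ≤ i < j ≤ m. Then P( M ≥ √( (n/R) / (6·log 2) ) ) ≥ (1/(6·log 2)) · ( exp( −(√(6·log(2)·R/n) + 1)²/2 ) − 2^{−n/(3R)} ). -/

import Mathlib

open scoped Classical

/-- The first `m` draws (positions `π 0, …, π (m-1)` in the ranking) are pairwise more
than `R` positions apart. -/
def PairwiseFar {n : ℕ} (R : ℕ) (π : Equiv.Perm (Fin n)) (m : ℕ) : Prop :=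
  ∀ i j : Fin n, (i : ℕ) < m → (j : ℕ) < m → i ≠ j → (R : ℤ) < |(π i : ℤ) - (π j : ℤ)|

/-- `M`: the largest `m` such that the first `m` draws are pairwise more than `R`
positions apart. -/
noncomputable def sepLength {n : ℕ} (R : ℕ) (π : Equiv.Perm (Fin n)) : ℕ :=
  sSup {m | m ≤ n ∧ PairwiseFar R π m}

section auxCounting

open Finset Equiv

lemma exists_perm_two {α : Type*} [DecidableEq α] {a b c d : α} (hab : a ≠ b) (hcd : c ≠ d) :
    ∃ σ : Equiv.Perm α, σ a = c ∧ σ b = d := by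
  have hb' : Equiv.swap a c b ≠ c := by
    intro h
    have : Equiv.swap a c b = Equiv.swap a c a := by rw [h, Equiv.swap_apply_left]
    exact hab ((Equiv.swap a c).injective this).symm
  refine ⟨Equiv.swap (Equiv.swap a c b) d * Equiv.swap a c, ?_, ?_⟩
  · simp only [Equiv.Perm.mul_apply, Equiv.swap_apply_left]
    exact Equiv.swap_apply_of_ne_of_ne (Ne.symm hb') hcd
  · simp only [Equiv.Perm.mul_apply]
    exact Equiv.swap_apply_left _ _

/-- fibers of `π ↦ (π i, π j)` over distinct pairs all have the same size -/
lemma fiber_card_eq {n : ℕ} (i j : Fin n) {a b c d : Fin n} (hab : a ≠ b) (hcd : c ≠ d) :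
    (univ.filter fun π : Equiv.Perm (Fin n) => π i = a ∧ π j = b).card
      = (univ.filter fun π : Equiv.Perm (Fin n) => π i = c ∧ π j = d).card := by
  obtain ⟨σ, h1, h2⟩ := exists_perm_two hab hcd
  refine Finset.card_bij' (fun π _ => σ * π) (fun π _ => σ⁻¹ * π) ?_ ?_ ?_ ?_
  · intro π hπ
    simp only [mem_filter, mem_univ, true_and] at hπ ⊢
    simp [Equiv.Perm.mul_apply, hπ.1, hπ.2, h1, h2]
  · intro π hπ
    simp only [mem_filter, mem_univ, true_and] at hπ ⊢
    constructor
    · simp [Equiv.Perm.mul_apply, hπ.1, ← h1]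
    · simp [Equiv.Perm.mul_apply, hπ.2, ← h2]
  · intro π _; simp [mul_assoc]
  · intro π _; simp [← mul_assoc]

/-- fiber size times number of offdiagonal pairs equals `n!` -/
lemma fiber_card_mul {n : ℕ} (i j : Fin n) (hij : i ≠ j) {a b : Fin n} (hab : a ≠ b) :
    (univ.filter fun π : Equiv.Perm (Fin n) => π i = a ∧ π j = b).card * (n * n - n)
      = n.factorial := by
  have h0 : (univ : Finset (Equiv.Perm (Fin n))).card
      = ∑ p ∈ (univ : Finset (Fin n)).offDiag,
          (univ.filter fun π : Equiv.Perm (Fin n) => (π i, π j) = p).card := by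
    rw [Finset.card_eq_sum_card_fiberwise
      (f := fun π : Equiv.Perm (Fin n) => (π i, π j)) (t := (univ : Finset (Fin n)).offDiag)]
    intro π _
    simp only [Finset.mem_coe, Finset.mem_offDiag, mem_univ, true_and]
    exact fun h => hij (π.injective h)
  have h1 : ∀ p ∈ (univ : Finset (Fin n)).offDiag,
      (univ.filter fun π : Equiv.Perm (Fin n) => (π i, π j) = p).card
        = (univ.filter fun π : Equiv.Perm (Fin n) => π i = a ∧ π j = b).card := by
    intro p hp
    simp only [Finset.mem_offDiag, mem_univ, true_and] at hp
    have : (univ.filter fun π : Equiv.Perm (Fin n) => (π i, π j) = p)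
        = (univ.filter fun π : Equiv.Perm (Fin n) => π i = p.1 ∧ π j = p.2) := by
      apply Finset.filter_congr; intro π _; simp [Prod.ext_iff]
    rw [this]
    exact fiber_card_eq i j hp hab
  rw [Finset.sum_congr rfl h1, Finset.sum_const, smul_eq_mul] at h0
  rw [Finset.offDiag_card] at h0
  simp only [Finset.card_univ, Fintype.card_perm, Fintype.card_fin] at h0
  rw [mul_comm] at h0
  exact h0.symm

/-- the number of close pairs in `Fin n` is at most `2Rn` -/
lemma card_close_pairs (n R : ℕ) :
    (((univ : Finset (Fin n)) ×ˢ (univ : Finset (Fin n))).filter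
        fun p : Fin n × Fin n => p.1 ≠ p.2 ∧ |(p.1 : ℤ) - (p.2 : ℤ)| ≤ R).card ≤ 2 * R * n := by
  have hsub : (((univ : Finset (Fin n)) ×ˢ (univ : Finset (Fin n))).filter
        fun p : Fin n × Fin n => p.1 ≠ p.2 ∧ |(p.1 : ℤ) - (p.2 : ℤ)| ≤ R)
      ⊆ (univ : Finset (Fin n)).biUnion fun a =>
          (univ.filter fun b : Fin n => b ≠ a ∧ |(a : ℤ) - (b : ℤ)| ≤ R).image fun b => (a, b) := by
    intro p hp
    simp only [mem_filter, mem_product, mem_univ, true_and] at hp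
    simp only [mem_biUnion, mem_univ, true_and, mem_image, mem_filter]
    exact ⟨p.1, p.2, ⟨⟨hp.1.symm, hp.2⟩, rfl⟩⟩
  refine le_trans (Finset.card_le_card hsub) ?_
  refine le_trans (Finset.card_biUnion_le) ?_
  have hinner : ∀ a : Fin n,
      ((univ.filter fun b : Fin n => b ≠ a ∧ |(a : ℤ) - (b : ℤ)| ≤ R).image fun b => (a, b)).card
        ≤ 2 * R := by
    intro a
    refine le_trans (Finset.card_image_le) ?_
    have := Finset.card_le_card_of_injOn (fun b : Fin n => (b : ℤ) - (a : ℤ))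
      (s := univ.filter fun b : Fin n => b ≠ a ∧ |(a : ℤ) - (b : ℤ)| ≤ R)
      (t := (Finset.Icc (-(R : ℤ)) R).erase 0) ?_ ?_
    · refine le_trans this ?_
      rw [Finset.card_erase_of_mem (by simp), Int.card_Icc]
      omega
    · intro b hb
      simp only [Finset.mem_coe, mem_filter, mem_univ, true_and] at hb
      simp only [Finset.mem_coe, Finset.mem_erase, Finset.mem_Icc]
      refine ⟨?_, ?_, ?_⟩
      · intro h
        exact hb.1 (Fin.ext (by omega))
      · have := abs_le.mp hb.2; omega
      · have := abs_le.mp hb.2; omega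
    · intro x _ y _ h
      have hxy : (x : ℤ) = y := by
        have : (x : ℤ) - a = (y : ℤ) - a := h
        omega
      exact Fin.ext (by exact_mod_cast hxy)
  calc ∑ a : Fin n, ((univ.filter fun b : Fin n => b ≠ a ∧ |(a : ℤ) - (b : ℤ)| ≤ R).image
          fun b => (a, b)).card
      ≤ ∑ _a : Fin n, 2 * R := Finset.sum_le_sum fun a _ => hinner a
    _ = 2 * R * n := by simp [mul_comm]

/-- per-pair union bound count -/
lemma card_bad_pair {n : ℕ} (R : ℕ) (i j : Fin n) (hij : i ≠ j) {a b : Fin n} (hab : a ≠ b) :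
    (univ.filter fun π : Equiv.Perm (Fin n) => |(π i : ℤ) - (π j : ℤ)| ≤ R).card
      ≤ 2 * R * n * (univ.filter fun π : Equiv.Perm (Fin n) => π i = a ∧ π j = b).card := by
  set S := (((univ : Finset (Fin n)) ×ˢ (univ : Finset (Fin n))).filter
      fun p : Fin n × Fin n => p.1 ≠ p.2 ∧ |(p.1 : ℤ) - (p.2 : ℤ)| ≤ R) with hS
  set F := (univ.filter fun π : Equiv.Perm (Fin n) => π i = a ∧ π j = b).card with hF
  have h0 : (univ.filter fun π : Equiv.Perm (Fin n) => |(π i : ℤ) - (π j : ℤ)| ≤ R).card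
      = ∑ p ∈ S, ((univ.filter fun π : Equiv.Perm (Fin n) => |(π i : ℤ) - (π j : ℤ)| ≤ R).filter
          fun π => (π i, π j) = p).card := by
    apply Finset.card_eq_sum_card_fiberwise (f := fun π : Equiv.Perm (Fin n) => (π i, π j))
    intro π hπ
    simp only [Finset.mem_coe, mem_filter, mem_univ, true_and] at hπ
    simp only [Finset.mem_coe, hS, mem_filter, mem_product, mem_univ, true_and]
    exact ⟨fun h => hij (π.injective h), hπ⟩
  have h1 : ∀ p ∈ S, ((univ.filter fun π : Equiv.Perm (Fin n) => |(π i : ℤ) - (π j : ℤ)| ≤ R).filter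
      fun π => (π i, π j) = p).card ≤ F := by
    intro p hp
    simp only [hS, mem_filter, mem_product, mem_univ, true_and] at hp
    rw [hF]
    refine le_trans (Finset.card_le_card ?_) (le_of_eq (fiber_card_eq i j hp.1 hab))
    intro π hπ
    simp only [mem_filter, mem_univ, true_and, Prod.ext_iff] at hπ ⊢
    exact hπ.2
  calc (univ.filter fun π : Equiv.Perm (Fin n) => |(π i : ℤ) - (π j : ℤ)| ≤ R).card
      = ∑ p ∈ S, _ := h0
    _ ≤ ∑ _p ∈ S, F := Finset.sum_le_sum h1
    _ = S.card * F := by rw [Finset.sum_const, smul_eq_mul]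
    _ ≤ 2 * R * n * F := Nat.mul_le_mul_right F (card_close_pairs n R)

lemma card_bad_pair' {n : ℕ} (R : ℕ) (i j : Fin n) (hij : i ≠ j) :
    (univ.filter fun π : Equiv.Perm (Fin n) => |(π i : ℤ) - (π j : ℤ)| ≤ R).card * (n * n - n)
      ≤ 2 * R * n * n.factorial := by
  calc (univ.filter fun π : Equiv.Perm (Fin n) => |(π i : ℤ) - (π j : ℤ)| ≤ R).card * (n * n - n)
      ≤ 2 * R * n * (univ.filter fun π : Equiv.Perm (Fin n) => π i = i ∧ π j = j).card
          * (n * n - n) :=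
        Nat.mul_le_mul_right _ (card_bad_pair R i j hij hij)
    _ = 2 * R * n * ((univ.filter fun π : Equiv.Perm (Fin n) => π i = i ∧ π j = j).card
          * (n * n - n)) := by ring
    _ = 2 * R * n * n.factorial := by rw [fiber_card_mul i j hij hij]

lemma card_P_le {n : ℕ} (u : ℕ) :
    ((((univ : Finset (Fin n)) ×ˢ (univ : Finset (Fin n))).filter
        fun p : Fin n × Fin n => (p.1 : ℕ) < (p.2 : ℕ) ∧ (p.2 : ℕ) < u).card) * 2 ≤ u * (u - 1) := by
  have h1 : ((((univ : Finset (Fin n)) ×ˢ (univ : Finset (Fin n))).filter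
        fun p : Fin n × Fin n => (p.1 : ℕ) < (p.2 : ℕ) ∧ (p.2 : ℕ) < u).card)
      ≤ ((Finset.range u ×ˢ Finset.range u).filter fun p : ℕ × ℕ => p.1 < p.2).card := by
    apply Finset.card_le_card_of_injOn (fun p => ((p.1 : ℕ), (p.2 : ℕ)))
    · intro p hp
      simp only [Finset.mem_coe, mem_filter, mem_product, mem_univ, true_and, Finset.mem_range] at hp ⊢
      exact ⟨⟨lt_trans hp.1 hp.2, hp.2⟩, hp.1⟩
    · intro p _ q _ h
      simp only [Prod.ext_iff] at h ⊢
      exact ⟨Fin.ext h.1, Fin.ext h.2⟩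
  have h2 : ((Finset.range u ×ˢ Finset.range u).filter fun p : ℕ × ℕ => p.1 < p.2).card
      ≤ ∑ j ∈ Finset.range u, j := by
    have hsub : ((Finset.range u ×ˢ Finset.range u).filter fun p : ℕ × ℕ => p.1 < p.2)
        ⊆ (Finset.range u).biUnion fun j => (Finset.range j).image fun i => (i, j) := by
      intro p hp
      simp only [mem_filter, mem_product, Finset.mem_range] at hp
      simp only [mem_biUnion, Finset.mem_range, mem_image]
      exact ⟨p.2, hp.1.2, p.1, hp.2, rfl⟩
    refine le_trans (Finset.card_le_card hsub) ?_
    refine le_trans Finset.card_biUnion_le ?_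
    exact Finset.sum_le_sum fun j _ => le_trans Finset.card_image_le (le_of_eq (Finset.card_range j))
  calc _ ≤ ((Finset.range u ×ˢ Finset.range u).filter fun p : ℕ × ℕ => p.1 < p.2).card * 2 :=
        Nat.mul_le_mul_right 2 h1
    _ ≤ (∑ j ∈ Finset.range u, j) * 2 := Nat.mul_le_mul_right 2 h2
    _ = u * (u - 1) := Finset.sum_range_id_mul_two u

lemma card_bad_total {n : ℕ} (R u : ℕ) :
    (univ.filter fun π : Equiv.Perm (Fin n) => ¬ PairwiseFar R π u).card * 2 * (n * n - n)
      ≤ u * (u - 1) * (2 * R * n * n.factorial) := by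
  set P := (((univ : Finset (Fin n)) ×ˢ (univ : Finset (Fin n))).filter
      fun p : Fin n × Fin n => (p.1 : ℕ) < (p.2 : ℕ) ∧ (p.2 : ℕ) < u) with hP
  have hsub : (univ.filter fun π : Equiv.Perm (Fin n) => ¬ PairwiseFar R π u)
      ⊆ P.biUnion fun p => univ.filter fun π : Equiv.Perm (Fin n) =>
          |(π p.1 : ℤ) - (π p.2 : ℤ)| ≤ R := by
    intro π hπ
    rw [Finset.mem_filter] at hπ
    simp only [mem_filter, mem_univ, true_and, PairwiseFar] at hπ
    push_neg at hπ
    obtain ⟨i, j, hi, hj, hne, habs⟩ := hπ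
    have hvne : (i : ℕ) ≠ (j : ℕ) := fun h => hne (Fin.ext h)
    simp only [mem_biUnion, mem_filter, mem_univ, true_and]
    rcases Nat.lt_or_ge (i : ℕ) (j : ℕ) with h | h
    · exact ⟨(i, j), by simp only [hP, mem_filter, mem_product, mem_univ, true_and]; exact ⟨h, hj⟩, habs⟩
    · have h' : (j : ℕ) < (i : ℕ) := lt_of_le_of_ne h (Ne.symm hvne)
      exact ⟨(j, i), by simp only [hP, mem_filter, mem_product, mem_univ, true_and]; exact ⟨h', hi⟩, by rw [abs_sub_comm]; exact habs⟩
  have h1 : (univ.filter fun π : Equiv.Perm (Fin n) => ¬ PairwiseFar R π u).card * (n * n - n)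
      ≤ P.card * (2 * R * n * n.factorial) := by
    calc (univ.filter fun π : Equiv.Perm (Fin n) => ¬ PairwiseFar R π u).card * (n * n - n)
        ≤ (∑ p ∈ P, (univ.filter fun π : Equiv.Perm (Fin n) =>
            |(π p.1 : ℤ) - (π p.2 : ℤ)| ≤ R).card) * (n * n - n) := by
          refine Nat.mul_le_mul_right _ (le_trans (Finset.card_le_card hsub)
            Finset.card_biUnion_le)
      _ = ∑ p ∈ P, (univ.filter fun π : Equiv.Perm (Fin n) =>
            |(π p.1 : ℤ) - (π p.2 : ℤ)| ≤ R).card * (n * n - n) := Finset.sum_mul _ _ _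
      _ ≤ ∑ _p ∈ P, 2 * R * n * n.factorial := by
          refine Finset.sum_le_sum fun p hp => ?_
          simp only [hP, mem_filter, mem_product, mem_univ, true_and] at hp
          exact card_bad_pair' R p.1 p.2 (fun h => absurd (congrArg Fin.val h) (Nat.ne_of_lt hp.1))
      _ = P.card * (2 * R * n * n.factorial) := by rw [Finset.sum_const, smul_eq_mul]
  calc (univ.filter fun π : Equiv.Perm (Fin n) => ¬ PairwiseFar R π u).card * 2 * (n * n - n)
      = (univ.filter fun π : Equiv.Perm (Fin n) => ¬ PairwiseFar R π u).card * (n * n - n) * 2 := by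
        ring
    _ ≤ P.card * (2 * R * n * n.factorial) * 2 := Nat.mul_le_mul_right 2 h1
    _ = P.card * 2 * (2 * R * n * n.factorial) := by ring
    _ ≤ u * (u - 1) * (2 * R * n * n.factorial) := Nat.mul_le_mul_right _ (card_P_le u)

end auxCounting

set_option maxHeartbeats 1600000 in
/-- for a uniformly random permutation `π` of `{1,…,n}`,
`P(M ≥ √((n/R)/(6 log 2))) ≥ (1/(6 log 2))·(exp(−(√(6 log(2) R/n)+1)²/2) − 2^{−n/(3R)})`. -/
theorem stmt_14 (n R : ℕ) (hn : 0 < n) (hR : 0 < R) :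
    (1 / (6 * Real.log 2)) *
        (Real.exp (-(Real.sqrt (6 * Real.log 2 * R / n) + 1) ^ 2 / 2) -
          (2 : ℝ) ^ (-(n : ℝ) / (3 * R))) ≤
      ((Finset.univ.filter (fun π : Equiv.Perm (Fin n) =>
          Real.sqrt (((n : ℝ) / R) / (6 * Real.log 2)) ≤ sepLength R π)).card : ℝ) /
        (n.factorial : ℝ) := by
  classical
  have hL0 : (0.6931471803 : ℝ) < Real.log 2 := Real.log_two_gt_d9
  set L := Real.log 2 with hLdef
  have hLpos : (0 : ℝ) < L := by nlinarith
  set s := Real.sqrt (((n : ℝ) / R) / (6 * L)) with hsdef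
  have hs0 : (0 : ℝ) ≤ s := Real.sqrt_nonneg _
  have hRpos : (0 : ℝ) < (R : ℝ) := by exact_mod_cast hR
  have hnpos : (0 : ℝ) < (n : ℝ) := by exact_mod_cast hn
  have hR1 : (1 : ℝ) ≤ (R : ℝ) := by exact_mod_cast hR
  have hss : s ^ 2 = ((n : ℝ) / R) / (6 * L) := Real.sq_sqrt (by positivity)
  have hfacpos : (0 : ℝ) < (n.factorial : ℝ) := by exact_mod_cast n.factorial_pos
  have hE2 : (0 : ℝ) < (2 : ℝ) ^ (-(n : ℝ) / (3 * R)) := Real.rpow_pos_of_pos two_pos _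
  have hx0 : (0 : ℝ) ≤ Real.sqrt (6 * L * R / n) := Real.sqrt_nonneg _
  have hE1le : Real.exp (-(Real.sqrt (6 * L * R / n) + 1) ^ 2 / 2) ≤ Real.exp (-(1/2)) := by
    apply Real.exp_le_exp.mpr
    nlinarith [sq_nonneg (Real.sqrt (6 * L * R / n))]
  have hexp_half : Real.exp (-(1/2 : ℝ)) ≤ 2/3 := by
    have h32 : (3 : ℝ)/2 ≤ Real.exp (1/2) := by nlinarith [Real.add_one_le_exp (1/2 : ℝ)]
    have hinv : Real.exp (-(1/2 : ℝ)) = (Real.exp (1/2))⁻¹ := by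
      rw [← Real.exp_neg]
    rw [hinv]
    rw [inv_le_comm₀ (by positivity) (by norm_num)]
    linarith
  by_cases hcase : s ≤ 1
  · -- every permutation qualifies
    have hall : (Finset.univ.filter (fun π : Equiv.Perm (Fin n) => s ≤ (sepLength R π : ℝ)))
        = Finset.univ := by
      rw [Finset.filter_eq_self]
      intro π _
      have h1 : 1 ≤ sepLength R π := by
        have hbdd : BddAbove {m | m ≤ n ∧ PairwiseFar R π m} := ⟨n, fun m hm => hm.1⟩
        have hmem : 1 ∈ {m | m ≤ n ∧ PairwiseFar R π m} := by
          refine ⟨hn, fun i j hi hj hne => absurd (Fin.ext ?_) hne⟩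
          omega
        exact le_csSup hbdd hmem
      calc s ≤ 1 := hcase
        _ ≤ (sepLength R π : ℝ) := by exact_mod_cast h1
    rw [hall]
    have huniv : ((Finset.univ : Finset (Equiv.Perm (Fin n))).card : ℝ) = (n.factorial : ℝ) := by
      simp [Finset.card_univ, Fintype.card_perm]
    rw [huniv, div_self (ne_of_gt hfacpos)]
    have hE1 : Real.exp (-(Real.sqrt (6 * L * R / n) + 1) ^ 2 / 2) ≤ 1 :=
      le_trans hE1le (Real.exp_le_one_iff.mpr (by norm_num))
    have hc1 : 1 / (6 * L) ≤ 1 := by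
      rw [div_le_one (by positivity)]
      nlinarith
    have hb1 : Real.exp (-(Real.sqrt (6 * L * R / n) + 1) ^ 2 / 2)
        - (2 : ℝ) ^ (-(n : ℝ) / (3 * R)) ≤ 1 := by linarith
    calc (1 / (6 * L)) * (Real.exp (-(Real.sqrt (6 * L * R / n) + 1) ^ 2 / 2)
            - (2 : ℝ) ^ (-(n : ℝ) / (3 * R)))
        ≤ (1 / (6 * L)) * 1 := by
          exact mul_le_mul_of_nonneg_left hb1 (by positivity)
      _ ≤ 1 := by linarith
  · push_neg at hcase
    set u := ⌈s⌉₊ with hudef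
    have hs_le_u : s ≤ (u : ℝ) := Nat.le_ceil s
    have hu_lt : (u : ℝ) < s + 1 := Nat.ceil_lt_add_one hs0
    have hu1 : 1 ≤ u := Nat.one_le_ceil_iff.mpr (by linarith)
    -- n > 6 L R
    have hnLR : 6 * L * (R : ℝ) < (n : ℝ) := by
      have h2 : (1 : ℝ) < s ^ 2 := by nlinarith
      rw [hss] at h2
      have h3 : 6 * L < (n : ℝ) / R := (one_lt_div (by positivity)).mp h2
      calc 6 * L * (R : ℝ) < ((n : ℝ) / R) * R := by
            exact mul_lt_mul_of_pos_right h3 hRpos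
        _ = (n : ℝ) := by field_simp
    have hn5 : (5 : ℕ) ≤ n := by
      by_contra h
      push_neg at h
      have h4 : (n : ℝ) ≤ 4 := by exact_mod_cast Nat.lt_succ_iff.mp h
      nlinarith
    have hnn5 : (5 : ℝ) ≤ (n : ℝ) := by exact_mod_cast hn5
    have hun : u ≤ n := by
      rw [hudef]
      apply Nat.ceil_le.mpr
      have hkey : s ^ 2 * (6 * L) * R = (n : ℝ) := by
        rw [hss]; field_simp
      have hs2 : s ≤ s ^ 2 := by nlinarith
      have h6LR : (4 : ℝ) ≤ 6 * L * R := by nlinarith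
      have h4s : s ^ 2 * 4 ≤ s ^ 2 * (6 * L * R) := by nlinarith [sq_nonneg s]
      nlinarith
    -- counting bound
    have hcount := card_bad_total (n := n) R u
    set B := (Finset.univ.filter fun π : Equiv.Perm (Fin n) => ¬ PairwiseFar R π u).card with hB
    set G := (Finset.univ.filter fun π : Equiv.Perm (Fin n) => s ≤ (sepLength R π : ℝ)).card
      with hGdef
    have hsup : (Finset.univ.filter fun π : Equiv.Perm (Fin n) => PairwiseFar R π u)
        ⊆ (Finset.univ.filter fun π : Equiv.Perm (Fin n) => s ≤ (sepLength R π : ℝ)) := by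
      intro π hπ
      simp only [Finset.mem_filter, Finset.mem_univ, true_and] at hπ ⊢
      have hbdd : BddAbove {m | m ≤ n ∧ PairwiseFar R π m} := ⟨n, fun m hm => hm.1⟩
      have hle : u ≤ sepLength R π := le_csSup hbdd ⟨hun, hπ⟩
      calc s ≤ (u : ℝ) := hs_le_u
        _ ≤ (sepLength R π : ℝ) := by exact_mod_cast hle
    have hpart : (Finset.univ.filter fun π : Equiv.Perm (Fin n) => PairwiseFar R π u).card + B
        = n.factorial := by
      rw [hB, Finset.card_filter_add_card_filter_not]
      simp [Finset.card_univ, Fintype.card_perm]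
    have hG : (n.factorial : ℝ) - B ≤ G := by
      have h5 : (Finset.univ.filter fun π : Equiv.Perm (Fin n) => PairwiseFar R π u).card ≤ G :=
        Finset.card_le_card hsup
      have h6 : ((Finset.univ.filter fun π : Equiv.Perm (Fin n) => PairwiseFar R π u).card : ℝ)
          + (B : ℝ) = (n.factorial : ℝ) := by exact_mod_cast congrArg Nat.cast hpart
      have h7 : ((Finset.univ.filter fun π : Equiv.Perm (Fin n) => PairwiseFar R π u).card : ℝ)
          ≤ (G : ℝ) := by exact_mod_cast h5
      linarith
    -- real cast of the counting bound
    have hnnn : n ≤ n * n := Nat.le_mul_of_pos_left n hn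
    have hcountR : (B : ℝ) * 2 * ((n : ℝ) * n - n)
        ≤ (u : ℝ) * ((u : ℝ) - 1) * (2 * R * n * (n.factorial : ℝ)) := by
      have := hcount
      have hcast : ((B * 2 * (n * n - n) : ℕ) : ℝ)
          ≤ ((u * (u - 1) * (2 * R * n * n.factorial) : ℕ) : ℝ) := by exact_mod_cast this
      push_cast [Nat.cast_sub hnnn, Nat.cast_sub hu1] at hcast
      convert hcast using 1 <;> ring
    -- key analytic facts
    have hkey : (R : ℝ) * s ^ 2 * (6 * L) = (n : ℝ) := by
      rw [hss]; field_simp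
    have hRs : (R : ℝ) * s * (6 * L) ≤ (n : ℝ) := by
      have hsq : ((R : ℝ) * s * (6 * L)) ^ 2 ≤ (n : ℝ) ^ 2 := by nlinarith
      nlinarith [mul_nonneg (mul_nonneg (le_of_lt hRpos) hs0) (by positivity : (0:ℝ) ≤ 6 * L)]
    -- K := u(u-1)R ; K * 3L ≤ n
    have hK : (u : ℝ) * ((u : ℝ) - 1) * R * (3 * L) ≤ (n : ℝ) := by
      have hu1R : (0 : ℝ) ≤ (u : ℝ) - 1 := by
        have : (1 : ℝ) ≤ (u : ℝ) := by exact_mod_cast hu1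
        linarith
      have h8 : (u : ℝ) * ((u : ℝ) - 1) ≤ (s + 1) * s := by nlinarith
      nlinarith [mul_le_mul_of_nonneg_right h8 (by positivity : (0:ℝ) ≤ (R : ℝ) * (3 * L))]
    -- B * (2L) ≤ n!
    have hBled : (B : ℝ) * (2 * L) ≤ (n.factorial : ℝ) := by
      have hBpos : (0 : ℝ) ≤ (B : ℝ) := Nat.cast_nonneg B
      have ha : 3 * L * ((B : ℝ) * 2 * ((n : ℝ) * n - n))
          ≤ 3 * L * ((u : ℝ) * ((u : ℝ) - 1) * (2 * R * n * (n.factorial : ℝ))) :=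
        mul_le_mul_of_nonneg_left hcountR (by positivity)
      have hb : ((u : ℝ) * ((u : ℝ) - 1) * R * (3 * L)) * (2 * n * (n.factorial : ℝ))
          ≤ (n : ℝ) * (2 * n * (n.factorial : ℝ)) :=
        mul_le_mul_of_nonneg_right hK (by positivity)
      have hc : 6 * L * (B : ℝ) * ((n : ℝ) * n - n) ≤ 2 * (n : ℝ) ^ 2 * (n.factorial : ℝ) := by
        nlinarith [ha, hb]
      have hd : 2 * (n : ℝ) ^ 2 ≤ 3 * ((n : ℝ) * n - n) := by nlinarith
      have hpos3 : (0 : ℝ) < 3 * ((n : ℝ) * n - n) := by nlinarith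
      nlinarith [mul_le_mul_of_nonneg_right hd (le_of_lt hfacpos)]
    -- final chain
    have hstep1 : (1 / (6 * L)) * (Real.exp (-(Real.sqrt (6 * L * R / n) + 1) ^ 2 / 2)
          - (2 : ℝ) ^ (-(n : ℝ) / (3 * R))) ≤ (1 / (6 * L)) * (2/3) := by
      apply mul_le_mul_of_nonneg_left _ (by positivity)
      have := le_trans hE1le hexp_half
      linarith
    have hstep2 : (1 / (6 * L)) * (2/3 : ℝ) = 1 / (9 * L) := by
      field_simp; ring
    have hstep3 : 1 / (9 * L) ≤ 1 - 1 / (2 * L) := by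
      have hinv : 1 / L ≤ 1 / 0.6931471803 :=
        one_div_le_one_div_of_le (by norm_num) (le_of_lt hL0)
      have he1 : 1 / (9 * L) = (1/9) * (1 / L) := by field_simp
      have he2 : 1 / (2 * L) = (1/2) * (1 / L) := by field_simp
      rw [he1, he2]
      nlinarith
    have hstep4 : 1 - 1 / (2 * L) ≤ ((n.factorial : ℝ) - B) / (n.factorial : ℝ) := by
      have hBn : (B : ℝ) / (n.factorial : ℝ) ≤ 1 / (2 * L) := by
        rw [div_le_div_iff₀ hfacpos (by positivity)]
        linarith
      have : ((n.factorial : ℝ) - B) / (n.factorial : ℝ)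
          = 1 - (B : ℝ) / (n.factorial : ℝ) := by
        field_simp
      rw [this]
      linarith
    have hstep5 : ((n.factorial : ℝ) - B) / (n.factorial : ℝ) ≤ (G : ℝ) / (n.factorial : ℝ) :=
      (div_le_div_iff_of_pos_right hfacpos).mpr hG
    calc (1 / (6 * L)) * (Real.exp (-(Real.sqrt (6 * L * R / n) + 1) ^ 2 / 2)
            - (2 : ℝ) ^ (-(n : ℝ) / (3 * R)))
        ≤ (1 / (6 * L)) * (2/3) := hstep1
      _ = 1 / (9 * L) := hstep2
      _ ≤ 1 - 1 / (2 * L) := hstep3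
      _ ≤ ((n.factorial : ℝ) - B) / (n.factorial : ℝ) := hstep4
      _ ≤ (G : ℝ) / (n.factorial : ℝ) := hstep5
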